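/- Let p1,…,p5 ∈ ℝ⁴ be affinely independent, let v = |det T| / 24 > 0 be the hypervolume of the pentatope with these vertices, and let a = (96·v/√5)^{1/4} (so the regular pentatope with edge length a has hypervolume v). Then the quality heuristic η⁽¹⁾ := 4 · (det A(R,T))^{1/4} / trace(A(R,T)) — which, since A(R,T) is symmetric positive definite, equals the ratio of the geometric mean to the arithmetic mean of the four eigenvalues of A(R,T) — satisfies η⁽¹⁾ = 5^{3/4} · √(384·v) / Σ_{1 ≤ i < j ≤ 5} d_{ij}, where the denominator is the sum of the ten squared edge lengths of the pentatope. -/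

import Mathlib

open Real Matrix Finset

/-- The edge-vector matrix of the regular pentatope with edge length `a`. -/
noncomputable def regularPentatopeMatrix (a : ℝ) : Matrix (Fin 4) (Fin 4) ℝ :=
  !![a * Real.sqrt 3 / 2, a * Real.sqrt 3 / 2, a * Real.sqrt 3 / 3, a * Real.sqrt 3 / 3;
     -a / 2,              a / 2,               0,                   0;
     0,                   0,                   a * Real.sqrt 6 / 3, a * Real.sqrt 6 / 12;
     0,                   0,                   0,                   a * Real.sqrt 10 / 4]

/-- The edge-vector matrix of the pentatope with vertices `p 0, …, p 4`. -/
noncomputable def edgeMatrix (p : Fin 5 → EuclideanSpace ℝ (Fin 4)) :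
    Matrix (Fin 4) (Fin 4) ℝ :=
  Matrix.of fun (k : Fin 4) (i : Fin 4) => (p i.succ - p 0) k

/-- `A(R,T) = (R⁻¹)ᵀ · TᵀT · R⁻¹`. -/
noncomputable def shapeMatrix (a : ℝ) (p : Fin 5 → EuclideanSpace ℝ (Fin 4)) :
    Matrix (Fin 4) (Fin 4) ℝ :=
  ((regularPentatopeMatrix a)⁻¹)ᵀ * ((edgeMatrix p)ᵀ * edgeMatrix p) *
    (regularPentatopeMatrix a)⁻¹

/-- For affinely independent vertices `p`, with hypervolume `v = |det T| / 24 > 0` and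
`a = (96·v/√5)^{1/4}`, the quality heuristic
`η⁽¹⁾ = 4 · (det A(R,T))^{1/4} / trace(A(R,T))` satisfies
`η⁽¹⁾ = 5^{3/4} · √(384·v) / Σ_{1 ≤ i < j ≤ 5} d_{ij}`. -/
lemma detR (a : ℝ) : (regularPentatopeMatrix a).det = a^4 * Real.sqrt 5 / 4 := by
  have h6 : Real.sqrt 6 = Real.sqrt 2 * Real.sqrt 3 := by
    rw [← Real.sqrt_mul (by norm_num)]; norm_num
  have h10 : Real.sqrt 10 = Real.sqrt 2 * Real.sqrt 5 := by
    rw [← Real.sqrt_mul (by norm_num)]; norm_num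
  have h2 : Real.sqrt 2 * Real.sqrt 2 = 2 := Real.mul_self_sqrt (by norm_num)
  have h3 : Real.sqrt 3 * Real.sqrt 3 = 3 := Real.mul_self_sqrt (by norm_num)
  simp only [regularPentatopeMatrix]
  simp [Matrix.det_succ_row_zero, Fin.sum_univ_succ, Fin.succAbove, show Fin.castSucc (1:Fin 3) < 2 by decide]
  rw [h6, h10]
  ring_nf
  rw [show Real.sqrt 3 ^ 2 = 3 from Real.sq_sqrt (by norm_num),
      show Real.sqrt 2 ^ 2 = 2 from Real.sq_sqrt (by norm_num)]
  ring

def Jmat : Matrix (Fin 4) (Fin 4) ℝ := Matrix.of fun _ _ => 1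

lemma RtR (a : ℝ) : (regularPentatopeMatrix a)ᵀ * regularPentatopeMatrix a
    = (a^2/2) • (1 + Jmat) := by
  have h2 : Real.sqrt 2 * Real.sqrt 2 = 2 := Real.mul_self_sqrt (by norm_num)
  have h3 : Real.sqrt 3 * Real.sqrt 3 = 3 := Real.mul_self_sqrt (by norm_num)
  have h6 : Real.sqrt 6 * Real.sqrt 6 = 6 := Real.mul_self_sqrt (by norm_num)
  have h10 : Real.sqrt 10 * Real.sqrt 10 = 10 := Real.mul_self_sqrt (by norm_num)
  have s3 : Real.sqrt 3 ^ 2 = 3 := Real.sq_sqrt (by norm_num)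
  have s6 : Real.sqrt 6 ^ 2 = 6 := Real.sq_sqrt (by norm_num)
  have s10 : Real.sqrt 10 ^ 2 = 10 := Real.sq_sqrt (by norm_num)
  ext i j
  fin_cases i <;> fin_cases j <;>
    simp only [Matrix.mul_apply, Matrix.transpose_apply, Fin.sum_univ_four,
      regularPentatopeMatrix, Jmat, Matrix.of_apply, Matrix.cons_val', Matrix.cons_val_zero,
      Matrix.cons_val_one, Matrix.head_cons, Matrix.head_fin_const, Matrix.empty_val',
      Matrix.cons_val_fin_one, Matrix.cons_val_two, Matrix.tail_cons, Matrix.cons_val_three,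
      Matrix.smul_apply, Matrix.add_apply, Matrix.one_apply, Fin.mk.injEq, smul_eq_mul] <;>
    norm_num <;> ring_nf <;> simp only [s3, s6, s10] <;> ring_nf


lemma Jmul : Jmat * Jmat = (4:ℝ) • Jmat := by
  ext i j
  simp [Jmat, Matrix.mul_apply, Fin.sum_univ_four]


lemma RtR_inv (a : ℝ) (ha : a ≠ 0) : ((regularPentatopeMatrix a)ᵀ * regularPentatopeMatrix a)⁻¹
    = (2/a^2) • (1 - (5:ℝ)⁻¹ • Jmat) := by
  apply Matrix.inv_eq_right_inv
  rw [RtR, Matrix.smul_mul, Matrix.mul_smul, smul_smul]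
  have h : a^2/2 * (2/a^2) = 1 := by field_simp
  rw [h, one_smul, add_mul, one_mul, mul_sub, mul_one, Matrix.mul_smul, Jmul]
  module

lemma norm_sq (x : EuclideanSpace ℝ (Fin 4)) : ‖x‖^2 = ∑ k, (x k)^2 := by
  rw [EuclideanSpace.norm_eq, Real.sq_sqrt (by positivity)]
  simp [sq_abs]


set_option maxHeartbeats 1000000 in
set_option maxRecDepth 10000 in
lemma Ssum (p : Fin 5 → EuclideanSpace ℝ (Fin 4)) :
    ∑ ij ∈ Finset.univ.filter (fun ij : Fin 5 × Fin 5 => ij.1 < ij.2),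
          ‖p ij.2 - p ij.1‖ ^ 2
    = 5 * ((edgeMatrix p)ᵀ * edgeMatrix p).trace
      - (Jmat * ((edgeMatrix p)ᵀ * edgeMatrix p)).trace := by
  rw [Finset.sum_filter, Fintype.sum_prod_type]
  simp only [Fin.sum_univ_five]
  simp only [show ¬((0:Fin 5) < 0) by decide, show ((0:Fin 5) < 1) by decide,
    show ((0:Fin 5) < 2) by decide, show ((0:Fin 5) < 3) by decide,
    show ((0:Fin 5) < 4) by decide, show ¬((1:Fin 5) < 0) by decide,
    show ¬((1:Fin 5) < 1) by decide, show ((1:Fin 5) < 2) by decide,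
    show ((1:Fin 5) < 3) by decide, show ((1:Fin 5) < 4) by decide,
    show ¬((2:Fin 5) < 0) by decide, show ¬((2:Fin 5) < 1) by decide,
    show ¬((2:Fin 5) < 2) by decide, show ((2:Fin 5) < 3) by decide,
    show ((2:Fin 5) < 4) by decide, show ¬((3:Fin 5) < 0) by decide,
    show ¬((3:Fin 5) < 1) by decide, show ¬((3:Fin 5) < 2) by decide,
    show ¬((3:Fin 5) < 3) by decide, show ((3:Fin 5) < 4) by decide,
    show ¬((4:Fin 5) < 0) by decide, show ¬((4:Fin 5) < 1) by decide,
    show ¬((4:Fin 5) < 2) by decide, show ¬((4:Fin 5) < 3) by decide,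
    show ¬((4:Fin 5) < 4) by decide, if_true, if_false, ite_true, ite_false,
    add_zero, zero_add]
  simp only [norm_sq, PiLp.sub_apply, Fin.sum_univ_four]
  simp only [Matrix.trace, Matrix.diag, Matrix.mul_apply, Matrix.transpose_apply,
    edgeMatrix, Jmat, Matrix.of_apply, Fin.sum_univ_four, PiLp.sub_apply]
  simp only [show (0:Fin 4).succ = (1:Fin 5) by rfl, show (1:Fin 4).succ = (2:Fin 5) by rfl,
    show (2:Fin 4).succ = (3:Fin 5) by rfl, show (3:Fin 4).succ = (4:Fin 5) by rfl]
  ring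

theorem key_sq (v a : ℝ) (hvpos : 0 < v)
    (ha : a = (96 * v / Real.sqrt 5) ^ ((1 : ℝ) / 4)) :
    10 * a^2 = (5:ℝ) ^ ((3:ℝ)/4) * Real.sqrt (384 * v) := by
  have h5 : (0:ℝ) < Real.sqrt 5 := Real.sqrt_pos.2 (by norm_num)
  have hx : (0:ℝ) < 96 * v / Real.sqrt 5 := by positivity
  have hapos : 0 < a := ha ▸ Real.rpow_pos_of_pos hx _
  have ha4 : a^4 = 96 * v / Real.sqrt 5 := by
    rw [ha, ← Real.rpow_natCast (_ ^ ((1:ℝ)/4)) 4, ← Real.rpow_mul hx.le]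
    norm_num
  have h1 : (0:ℝ) ≤ 10 * a^2 := by positivity
  have h2 : (0:ℝ) ≤ (5:ℝ) ^ ((3:ℝ)/4) * Real.sqrt (384 * v) := by positivity
  have hsq : (10 * a^2)^2 = ((5:ℝ) ^ ((3:ℝ)/4) * Real.sqrt (384 * v))^2 := by
    have e1 : ((5:ℝ) ^ ((3:ℝ)/4))^2 = (5:ℝ) ^ ((3:ℝ)/2) := by
      rw [← Real.rpow_natCast ((5:ℝ) ^ ((3:ℝ)/4)) 2, ← Real.rpow_mul (by norm_num)]
      norm_num
    have e2 : (5:ℝ) ^ ((3:ℝ)/2) = 5 * Real.sqrt 5 := by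
      rw [show (3:ℝ)/2 = 1 + 1/2 by norm_num, Real.rpow_add (by norm_num), Real.rpow_one,
        ← Real.sqrt_eq_rpow]
    have e3 : Real.sqrt (384 * v) ^ 2 = 384 * v := Real.sq_sqrt (by positivity)
    have e4 : Real.sqrt 5 * Real.sqrt 5 = 5 := Real.mul_self_sqrt (by norm_num)
    have : (10 * a^2)^2 = 100 * a^4 := by ring
    rw [this, ha4, mul_pow, e1, e2, e3]
    field_simp
    nlinarith [e4]
  calc 10 * a^2 = Real.sqrt ((10 * a^2)^2) := (Real.sqrt_sq h1).symm
    _ = Real.sqrt (((5:ℝ) ^ ((3:ℝ)/4) * Real.sqrt (384 * v))^2) := by rw [hsq]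
    _ = _ := Real.sqrt_sq h2


set_option maxHeartbeats 1000000 in
theorem quality_heuristic_one (p : Fin 5 → EuclideanSpace ℝ (Fin 4))
    (hp : AffineIndependent ℝ p) (v a : ℝ)
    (hv : v = |(edgeMatrix p).det| / 24) (hvpos : 0 < v)
    (ha : a = (96 * v / Real.sqrt 5) ^ ((1 : ℝ) / 4)) :
    4 * (shapeMatrix a p).det ^ ((1 : ℝ) / 4) / (shapeMatrix a p).trace =
      (5 : ℝ) ^ ((3 : ℝ) / 4) * Real.sqrt (384 * v) /
        ∑ ij ∈ Finset.univ.filter (fun ij : Fin 5 × Fin 5 => ij.1 < ij.2),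
          ‖p ij.2 - p ij.1‖ ^ 2 := by
  set R := regularPentatopeMatrix a with hR
  set T := edgeMatrix p with hT
  have h5 : (0:ℝ) < Real.sqrt 5 := Real.sqrt_pos.2 (by norm_num)
  have hx : (0:ℝ) < 96 * v / Real.sqrt 5 := by positivity
  have hapos : 0 < a := ha ▸ Real.rpow_pos_of_pos hx _
  have hane : a ≠ 0 := ne_of_gt hapos
  have ha4 : a^4 = 96 * v / Real.sqrt 5 := by
    rw [ha, ← Real.rpow_natCast (_ ^ ((1:ℝ)/4)) 4, ← Real.rpow_mul hx.le]
    norm_num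
  have hdetR : R.det = 24 * v := by
    rw [hR, detR, ha4]
    field_simp
    ring
  have hdetRne : R.det ≠ 0 := by rw [hdetR]; positivity
  have hdetT : |T.det| = 24 * v := by rw [hv]; ring
  -- determinant of the shape matrix is 1
  have hdetT2 : T.det ^ 2 = (24 * v)^2 := by
    rw [← hdetT, sq_abs]
  have hdetA : (shapeMatrix a p).det = 1 := by
    rw [shapeMatrix, Matrix.det_mul, Matrix.det_mul, Matrix.det_mul, Matrix.det_transpose,
      Matrix.det_transpose, Matrix.det_nonsing_inv, ← hR, ← hT]
    rw [Ring.inverse_eq_inv']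
    have h24 : (24:ℝ) * v ≠ 0 := by positivity
    field_simp [hdetR]
    rw [hdetR]; linarith [hdetT2]
  have hdetA14 : (shapeMatrix a p).det ^ ((1:ℝ)/4) = 1 := by
    rw [hdetA, Real.one_rpow]
  -- trace of the shape matrix
  set M := Tᵀ * T with hM
  have hRinv : R⁻¹ * (R⁻¹)ᵀ = (2/a^2) • (1 - (5:ℝ)⁻¹ • Jmat) := by
    rw [Matrix.transpose_nonsing_inv, ← Matrix.mul_inv_rev, hR, RtR_inv a hane]
  have htrace : (shapeMatrix a p).trace
      = (2/a^2) * (M.trace - (5:ℝ)⁻¹ * (Jmat * M).trace) := by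
    rw [shapeMatrix, ← hR, ← hT, ← hM, Matrix.trace_mul_cycle, ← Matrix.mul_assoc, hRinv]
    simp only [Matrix.smul_mul, Matrix.trace_smul, Matrix.sub_mul, Matrix.one_mul,
      Matrix.trace_sub, smul_eq_mul, Matrix.mul_assoc, hM]
  set S := ∑ ij ∈ Finset.univ.filter (fun ij : Fin 5 × Fin 5 => ij.1 < ij.2),
      ‖p ij.2 - p ij.1‖ ^ 2 with hS
  have hSsum : S = 5 * M.trace - (Jmat * M).trace := by
    rw [hS, hM, hT]; exact Ssum p
  have htrace2 : (shapeMatrix a p).trace = (2/(5*a^2)) * S := by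
    rw [htrace, hSsum]; field_simp
  -- positivity of S
  have hSpos : 0 < S := by
    rcases lt_or_eq_of_le (Finset.sum_nonneg (fun (ij : Fin 5 × Fin 5) _ => sq_nonneg ‖p ij.2 - p ij.1‖)) with h | h
    · exact h
    · exfalso
      have hmem : ((0:Fin 5), (1:Fin 5)) ∈
          Finset.univ.filter (fun ij : Fin 5 × Fin 5 => ij.1 < ij.2) :=
        Finset.mem_filter.2 ⟨Finset.mem_univ _, by decide⟩
      have hzero : ‖p 1 - p 0‖ ^ 2 = 0 := by
        have := (Finset.sum_eq_zero_iff_of_nonneg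
          (fun (ij : Fin 5 × Fin 5) _ => sq_nonneg ‖p ij.2 - p ij.1‖)).1 h.symm _ hmem
        simpa using this
      have hpe : p 1 = p 0 := by
        have : ‖p 1 - p 0‖ = 0 := by
          nlinarith [norm_nonneg (p 1 - p 0)]
        rw [norm_sub_eq_zero_iff] at this
        exact this
      have hcol : T.det = 0 := by
        apply Matrix.det_eq_zero_of_column_eq_zero 0
        intro k
        rw [hT]
        show (p (0:Fin 4).succ - p 0) k = 0
        rw [show (0:Fin 4).succ = (1:Fin 5) by rfl, hpe]
        simp
      rw [hcol] at hdetT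
      simp at hdetT
      linarith
  have hkey : 10 * a^2 = (5:ℝ) ^ ((3:ℝ)/4) * Real.sqrt (384 * v) := key_sq v a hvpos ha
  rw [hdetA14, htrace2, mul_one]
  have hden : 2/(5*a^2) * S ≠ 0 := (mul_pos (by positivity) hSpos).ne'
  rw [div_eq_div_iff hden (ne_of_gt hSpos), ← hkey]
  field_simp
  ring
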